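/- In the unit disc, let θ(r, R) be the angle at the center subtended by the intersection of the circle of radius R ≥ 1/2 centered at the origin with a circle of radius r ≤ 1/2 internally tangent to the unit circle, assuming R + 2r − 1 ≥ 0. Then there is a constant K > 0 (independent of r and R) such that (1/K)·√((1−R)(R+2r−1)) ≤ θ(r, R) ≤ K·√((1−R)(R+2r−1)). -/

import Mathlib

/-- The angle at the center of the unit disc subtended by the intersection of the circle
of radius `R` centered at the origin with a circle of radius `r` internally tangent to
the unit circle (whose center is at distance `1 - r` from the origin), computed from the
law of cosines: `r² = (1−r)² + R² − 2R(1−r)cos(θ/2)`. -/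
noncomputable def tangencyAngle (r R : ℝ) : ℝ :=
  2 * Real.arccos (((1 - r) ^ 2 + R ^ 2 - r ^ 2) / (2 * R * (1 - r)))

lemma arccos_antitone {x y : ℝ} (h : x ≤ y) : Real.arccos y ≤ Real.arccos x := by
  rw [Real.arccos, Real.arccos]
  have := Real.monotone_arcsin h
  linarith

set_option maxHeartbeats 1000000 in
/-- There is a universal constant `K > 0` such that for `1/2 ≤ R ≤ 1`,
`0 < r ≤ 1/2` and `R + 2r − 1 ≥ 0`, the angle `θ(r,R)` satisfies
`(1/K)√((1−R)(R+2r−1)) ≤ θ(r,R) ≤ K√((1−R)(R+2r−1))`. -/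
theorem tangency_angle_estimate :
    ∃ K : ℝ, 0 < K ∧ ∀ r R : ℝ, 0 < r → r ≤ 1 / 2 → 1 / 2 ≤ R → R ≤ 1 →
      0 ≤ R + 2 * r - 1 →
      (1 / K) * Real.sqrt ((1 - R) * (R + 2 * r - 1)) ≤ tangencyAngle r R ∧
      tangencyAngle r R ≤ K * Real.sqrt ((1 - R) * (R + 2 * r - 1)) := by
  have hpi : (3 : ℝ) < Real.pi := by
    have := Real.pi_gt_three
    linarith
  refine ⟨2 * Real.pi, by linarith, fun r R hr hr2 hR2 hR1 hD0 => ?_⟩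
  set D : ℝ := (1 - R) * (R + 2 * r - 1) with hDdef
  have hD : 0 ≤ D := mul_nonneg (by linarith) hD0
  set c : ℝ := 2 * R * (1 - r) with hcdef
  have hc1 : (1 : ℝ) / 2 ≤ c := by nlinarith
  have hc2 : c ≤ 2 := by nlinarith
  have hcpos : 0 < c := by linarith
  set x : ℝ := ((1 - r) ^ 2 + R ^ 2 - r ^ 2) / c with hxdef
  have hxval : 1 - x = D / c := by
    rw [hxdef, eq_div_iff (ne_of_gt hcpos)]
    field_simp
    ring
  have hx0 : 0 ≤ x := by
    apply div_nonneg _ hcpos.le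
    nlinarith
  have hx1 : x ≤ 1 := by
    have : 0 ≤ D / c := div_nonneg hD hcpos.le
    linarith [hxval ▸ this]
  -- t = sqrt((1-x)/2)
  set t : ℝ := Real.sqrt (D / (2 * c)) with htdef
  have ht0 : 0 ≤ t := Real.sqrt_nonneg _
  have htsq : t ^ 2 = D / (2 * c) := Real.sq_sqrt (div_nonneg hD (by linarith))
  have hθ : tangencyAngle r R = 2 * Real.arccos x := by rw [tangencyAngle]
  have hsqD : 0 ≤ Real.sqrt D := Real.sqrt_nonneg _
  have hsqDsq : Real.sqrt D ^ 2 = D := Real.sq_sqrt hD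
  clear_value t x c D
  have h1x : 1 - x = 2 * t ^ 2 := by
    rw [htsq, hxval]; field_simp
  have ht1 : t ≤ 1 := by nlinarith
  -- lower bound: 2t ≤ arccos x
  have hlow : 2 * t ≤ Real.arccos x := by
    have hcos : x ≤ Real.cos (2 * t) := by
      have hs : Real.sin t ≤ t := Real.sin_le ht0
      have hs0 : 0 ≤ Real.sin t :=
        Real.sin_nonneg_of_nonneg_of_le_pi ht0 (by linarith)
      have hc2t : Real.cos (2 * t) = 1 - 2 * Real.sin t ^ 2 := by
        have := Real.sin_sq_add_cos_sq t
        rw [Real.cos_two_mul]; linarith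
      have hss : Real.sin t ^ 2 ≤ t ^ 2 := pow_le_pow_left₀ hs0 hs 2
      linarith
    calc 2 * t = Real.arccos (Real.cos (2 * t)) :=
          (Real.arccos_cos (by linarith) (by linarith)).symm
      _ ≤ Real.arccos x := arccos_antitone hcos
  -- upper bound: arccos x ≤ π t
  have hup : Real.arccos x ≤ Real.pi * t := by
    have hcos : Real.cos (Real.pi * t) ≤ x := by
      have hhalf : 0 ≤ Real.pi * t / 2 := by positivity
      have hhalf2 : Real.pi * t / 2 ≤ Real.pi / 2 := by nlinarith
      have hs : t ≤ Real.sin (Real.pi * t / 2) := by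
        have := Real.mul_le_sin hhalf hhalf2
        have hpi0 : Real.pi ≠ 0 := by positivity
        calc t = 2 / Real.pi * (Real.pi * t / 2) := by field_simp
          _ ≤ Real.sin (Real.pi * t / 2) := this
      have gen : ∀ s : ℝ, Real.cos (2 * s) = 1 - 2 * Real.sin s ^ 2 := by
        intro s
        have h1 := Real.sin_sq_add_cos_sq s
        rw [Real.cos_two_mul]; linarith
      have hct : Real.cos (Real.pi * t) = 1 - 2 * Real.sin (Real.pi * t / 2) ^ 2 := by
        have := gen (Real.pi * t / 2)
        rwa [show 2 * (Real.pi * t / 2) = Real.pi * t by ring] at this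
      have hss : t ^ 2 ≤ Real.sin (Real.pi * t / 2) ^ 2 := pow_le_pow_left₀ ht0 hs 2
      linarith
    calc Real.arccos x ≤ Real.arccos (Real.cos (Real.pi * t)) := arccos_antitone hcos
      _ = Real.pi * t := Real.arccos_cos (by positivity)
          (mul_le_of_le_one_right Real.pi_pos.le ht1)
  -- compare t with sqrt D
  have htlo : Real.sqrt D / 2 ≤ t := by
    have h : (Real.sqrt D / 2) ^ 2 ≤ t ^ 2 := by
      rw [htsq, div_pow, hsqDsq]
      rw [div_le_div_iff₀ (by norm_num) (by linarith)]
      have h6 : 2 * c ≤ 2 ^ 2 := by linarith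
      exact mul_le_mul_of_nonneg_left h6 hD
    exact (pow_le_pow_iff_left₀ (by positivity) ht0 two_ne_zero).mp h
  have hthi : t ≤ Real.sqrt D := by
    have h : t ^ 2 ≤ Real.sqrt D ^ 2 := by
      rw [htsq, hsqDsq]
      rw [div_le_iff₀ (by linarith)]
      have h7 : 1 * D ≤ D * (2 * c) := by nlinarith
      linarith
    exact (pow_le_pow_iff_left₀ ht0 hsqD two_ne_zero).mp h
  rw [hθ]
  constructor
  · have h4 : 1 / (2 * Real.pi) * Real.sqrt D ≤ 2 * (2 * t) := by
      rw [div_mul_eq_mul_div, div_le_iff₀ (by positivity)]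
      nlinarith [hsqD, htlo, hpi]
    linarith
  · have h5 : 2 * (Real.pi * t) ≤ 2 * Real.pi * Real.sqrt D := by
      nlinarith [hthi, hpi]
    linarith
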